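/- Gentle Operator Lemma: let ρ be a d × d density matrix (positive semidefinite with unit trace), let Λ be a Hermitian d × d matrix with 0 ≤ Λ ≤ I (in the Loewner order), and let ε ≥ 0 satisfy Tr{Λρ} ≥ 1 − ε. Then ‖ρ − √Λ ρ √Λ‖₁ ≤ 2√ε, where √Λ is the positive semidefinite square root of Λ. -/

import Mathlib

open scoped ComplexOrder

noncomputable section

/-- The positive semidefinite square root, as `Matrix.PosSemidef.sqrt` was defined in the
older Mathlib (removed since). -/
def Matrix.PosSemidef.sqrt {n : Type*} [Fintype n] [DecidableEq n] {A : Matrix n n ℂ}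
    (hA : A.PosSemidef) : Matrix n n ℂ :=
  hA.1.eigenvectorUnitary.1 * Matrix.diagonal ((↑) ∘ (√·) ∘ hA.1.eigenvalues) *
    (star hA.1.eigenvectorUnitary : Matrix n n ℂ)

/-- The trace norm `‖A‖₁ = Tr √(AᴴA)` of a complex square matrix. -/
def traceNorm {d : ℕ} (A : Matrix (Fin d) (Fin d) ℂ) : ℝ :=
  ((Matrix.posSemidef_conjTranspose_mul_self A).sqrt.trace).re

open Matrix

section Aux
variable {d : ℕ}
lemma trace_re_nonneg' {M : Matrix (Fin d) (Fin d) ℂ} (hM : M.PosSemidef) :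
    0 ≤ M.trace.re := by
  rw [Matrix.trace, Complex.re_sum]
  apply Finset.sum_nonneg
  intro i _
  have := hM.re_dotProduct_nonneg (Pi.single i 1)
  simpa [dotProduct, Matrix.mulVec_single, Pi.single_apply, Finset.sum_ite_eq,
    Matrix.diag] using this

def fro2 (A : Matrix (Fin d) (Fin d) ℂ) : ℝ := ((Aᴴ * A).trace).re

lemma fro2_nonneg (A : Matrix (Fin d) (Fin d) ℂ) : 0 ≤ fro2 A :=
  trace_re_nonneg' (Matrix.posSemidef_conjTranspose_mul_self A)

lemma fro2_eq_sum (A : Matrix (Fin d) (Fin d) ℂ) :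
    fro2 A = ∑ j, ∑ i, ‖A i j‖ ^ 2 := by
  simp only [fro2, Matrix.trace, Matrix.diag, Matrix.mul_apply, Complex.re_sum,
    Matrix.conjTranspose_apply]
  congr 1; ext j; congr 1; ext i
  rw [show star (A i j) = (starRingEnd ℂ) (A i j) from rfl, ← Complex.normSq_eq_conj_mul_self,
    Complex.ofReal_re, Complex.normSq_eq_norm_sq]

lemma cs (A B : Matrix (Fin d) (Fin d) ℂ) :
    ((Aᴴ * B).trace).re ≤ Real.sqrt (fro2 A) * Real.sqrt (fro2 B) := by
  classical
  set a : EuclideanSpace ℂ (Fin d × Fin d) := WithLp.toLp 2 (fun p : Fin d × Fin d => A p.2 p.1) with ha'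
  set b : EuclideanSpace ℂ (Fin d × Fin d) := WithLp.toLp 2 (fun p : Fin d × Fin d => B p.2 p.1) with hb'
  have hinner : (Aᴴ * B).trace = inner ℂ a b := by
    rw [Matrix.trace]
    simp only [Matrix.diag, Matrix.mul_apply, Matrix.conjTranspose_apply, PiLp.inner_apply,
      RCLike.inner_apply]
    rw [Fintype.sum_prod_type]
    exact Finset.sum_congr rfl fun i _ => Finset.sum_congr rfl fun j _ => mul_comm _ _
  have ha : ‖a‖ = Real.sqrt (fro2 A) := by
    rw [EuclideanSpace.norm_eq, fro2_eq_sum, Fintype.sum_prod_type]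
  have hb : ‖b‖ = Real.sqrt (fro2 B) := by
    rw [EuclideanSpace.norm_eq, fro2_eq_sum, Fintype.sum_prod_type]
  have hre : ((Aᴴ * B).trace).re ≤ ‖(inner ℂ a b : ℂ)‖ := by
    rw [hinner]; exact (Complex.re_le_norm _)
  exact hre.trans ((norm_inner_le_norm a b).trans_eq (by rw [ha, hb]))

-- conjugated diagonal algebra
variable (U : Matrix.unitaryGroup (Fin d) ℂ)

def conjD (c : Fin d → ℂ) : Matrix (Fin d) (Fin d) ℂ :=
  (U : Matrix (Fin d) (Fin d) ℂ) * Matrix.diagonal c * star (U : Matrix (Fin d) (Fin d) ℂ)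

lemma conjD_mul (c c' : Fin d → ℂ) : conjD U c * conjD U c' = conjD U (c * c') := by
  simp only [conjD, Matrix.mul_assoc]
  rw [← Matrix.mul_assoc (star (U : Matrix (Fin d) (Fin d) ℂ)) (U : Matrix (Fin d) (Fin d) ℂ),
    U.2.1, Matrix.one_mul, ← Matrix.mul_assoc (Matrix.diagonal c), Matrix.diagonal_mul_diagonal]
  rfl

lemma conjD_add (c c' : Fin d → ℂ) : conjD U c + conjD U c' = conjD U (c + c') := by
  have hd : Matrix.diagonal (c + c') = Matrix.diagonal c + Matrix.diagonal c' := by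
    ext i j; by_cases h : i = j <;> simp [Matrix.diagonal, h]
  simp only [conjD, hd, Matrix.mul_add, Matrix.add_mul]

lemma conjD_one : conjD U 1 = 1 := by
  rw [conjD, show Matrix.diagonal (1 : Fin d → ℂ) = 1 from Matrix.diagonal_one,
    Matrix.mul_one]
  exact U.2.2

lemma conjD_trace (c : Fin d → ℂ) : (conjD U c).trace = ∑ i, c i := by
  rw [conjD, Matrix.trace_mul_cycle, U.2.1, Matrix.one_mul, Matrix.trace_diagonal]

lemma conjD_conjTranspose (c : Fin d → ℂ) : (conjD U c)ᴴ = conjD U (star c) := by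
  simp only [conjD, Matrix.star_eq_conjTranspose, Matrix.conjTranspose_mul,
    Matrix.conjTranspose_conjTranspose, Matrix.diagonal_conjTranspose, Matrix.mul_assoc]

lemma conjD_posSemidef (c : Fin d → ℝ) (hc : ∀ i, 0 ≤ c i) :
    (conjD U fun i => (c i : ℂ)).PosSemidef := by
  have hd : (Matrix.diagonal fun i => (c i : ℂ)).PosSemidef :=
    Matrix.posSemidef_diagonal_iff.mpr fun i => by
      simpa using Complex.zero_le_real.mpr (hc i)
  simpa [conjD, Matrix.star_eq_conjTranspose] using
    hd.mul_mul_conjTranspose_same (U : Matrix (Fin d) (Fin d) ℂ)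

-- extra conjD lemmas
lemma conjD_sub (c c' : Fin d → ℂ) : conjD U c - conjD U c' = conjD U (c - c') := by
  have hd : Matrix.diagonal (c - c') = Matrix.diagonal c - Matrix.diagonal c' := by
    ext i j; by_cases h : i = j <;> simp [Matrix.diagonal, h]
  simp only [conjD, hd, Matrix.mul_sub, Matrix.sub_mul]

lemma nonneg_of_conjD_posSemidef (c : Fin d → ℝ)
    (h : (conjD U fun i => (c i : ℂ)).PosSemidef) : ∀ i, 0 ≤ c i := by
  intro i
  have h2 := h.conjTranspose_mul_mul_same (U : Matrix (Fin d) (Fin d) ℂ)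
  have hd : (U : Matrix (Fin d) (Fin d) ℂ)ᴴ * (conjD U fun i => (c i : ℂ)) *
      (U : Matrix (Fin d) (Fin d) ℂ) = Matrix.diagonal fun i => (c i : ℂ) := by
    rw [conjD, ← Matrix.star_eq_conjTranspose]
    rw [Matrix.mul_assoc, Matrix.mul_assoc, Matrix.mul_assoc, U.2.1, Matrix.mul_one,
      ← Matrix.mul_assoc, U.2.1, Matrix.one_mul]
  rw [hd] at h2
  have := Matrix.posSemidef_diagonal_iff.mp h2 i
  exact_mod_cast Complex.zero_le_real.mp (by exact_mod_cast this)

lemma spectral_conjD {A : Matrix (Fin d) (Fin d) ℂ} (hA : A.IsHermitian) :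
    A = conjD hA.eigenvectorUnitary fun i => (hA.eigenvalues i : ℂ) :=
  hA.spectral_theorem

lemma sqrt_conjD {A : Matrix (Fin d) (Fin d) ℂ} (hA : A.PosSemidef) :
    hA.sqrt = conjD hA.1.eigenvectorUnitary fun i => ((Real.sqrt (hA.1.eigenvalues i) : ℝ) : ℂ) :=
  rfl

lemma Matrix.PosSemidef.posSemidef_sqrt {A : Matrix (Fin d) (Fin d) ℂ} (hA : A.PosSemidef) :
    hA.sqrt.PosSemidef := by
  rw [sqrt_conjD]
  exact conjD_posSemidef _ _ fun i => Real.sqrt_nonneg _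

lemma Matrix.PosSemidef.sqrt_mul_self {A : Matrix (Fin d) (Fin d) ℂ} (hA : A.PosSemidef) :
    hA.sqrt * hA.sqrt = A := by
  rw [sqrt_conjD, conjD_mul]
  refine Eq.trans ?_ (spectral_conjD hA.1).symm
  congr 1
  funext i
  simp only [Pi.mul_apply, ← Complex.ofReal_mul, Real.mul_self_sqrt (hA.eigenvalues_nonneg i)]

end Aux

open scoped MatrixOrder in
theorem Matrix.PosSemidef.eq_sqrt_of_sq_eq {n : Type*} [Fintype n] [DecidableEq n]
    {A : Matrix n n ℂ} (hA : A.PosSemidef) {B : Matrix n n ℂ} (hB : B.PosSemidef)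
    (hAB : A ^ 2 = B) : A = hB.sqrt := by
  have key : hB.sqrt = CFC.sqrt B := by
    rw [CFC.sqrt_eq_cfc, cfc_nnreal_eq_real _ B hB.nonneg, hB.1.cfc_eq, Matrix.IsHermitian.cfc,
      Unitary.conjStarAlgAut_apply]
    simp only [Matrix.PosSemidef.sqrt, Function.comp_def, Real.coe_sqrt,
      Real.coe_toNNReal _ (hB.eigenvalues_nonneg _)]
    rfl
  rw [key, eq_comm, CFC.sqrt_eq_iff _ _ hB.nonneg hA.nonneg, ← sq, hAB]

/-- **Gentle Operator Lemma**: if `ρ` is a density matrix, `0 ≤ Λ ≤ I`, and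
`Tr{Λρ} ≥ 1 − ε`, then `‖ρ − √Λ ρ √Λ‖₁ ≤ 2√ε`. -/
theorem gentle_operator {d : ℕ} (ρ Λ : Matrix (Fin d) (Fin d) ℂ)
    (hρ : ρ.PosSemidef) (hρtr : ρ.trace = 1)
    (hΛ : Λ.PosSemidef) (hΛI : (1 - Λ).PosSemidef)
    (ε : ℝ) (hε : 0 ≤ ε) (h : 1 - ε ≤ ((Λ * ρ).trace).re) :
    traceNorm (ρ - hΛ.sqrt * ρ * hΛ.sqrt) ≤ 2 * Real.sqrt ε := by
  classical
  set V := hΛ.1.eigenvectorUnitary with hVdef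
  set μ := hΛ.1.eigenvalues with hμdef
  have hΛeq : Λ = conjD V fun i => (μ i : ℂ) := spectral_conjD hΛ.1
  have hμ0 : ∀ i, 0 ≤ μ i := hΛ.eigenvalues_nonneg
  have h1 : (1 : Matrix (Fin d) (Fin d) ℂ) = conjD V fun i => ((1:ℝ) : ℂ) := by
    rw [show (fun i : Fin d => ((1:ℝ) : ℂ)) = (1 : Fin d → ℂ) by funext i; simp, conjD_one]
  have h1Λ : (1 : Matrix (Fin d) (Fin d) ℂ) - Λ = conjD V fun i => ((1 - μ i : ℝ) : ℂ) := by
    have hfun : ((fun _ : Fin d => ((1:ℝ) : ℂ)) - fun i => ((μ i : ℝ) : ℂ))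
        = fun i => ((1 - μ i : ℝ) : ℂ) := by
      funext i; simp only [Pi.sub_apply]; push_cast; ring
    rw [hΛeq]
    conv_lhs => rw [h1]
    rw [conjD_sub, hfun]
  have hμ1 : ∀ i, μ i ≤ 1 := by
    intro i
    have := nonneg_of_conjD_posSemidef V (fun i => 1 - μ i) (h1Λ ▸ hΛI) i
    linarith
  -- the square root X
  set X := hΛ.sqrt with hXdef
  have hXeq : X = conjD V fun i => ((Real.sqrt (μ i) : ℝ) : ℂ) := sqrt_conjD hΛ
  have hXps : X.PosSemidef := hΛ.posSemidef_sqrt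
  have hXh : Xᴴ = X := hXps.1
  have h1X : (1 : Matrix (Fin d) (Fin d) ℂ) - X = conjD V fun i => ((1 - Real.sqrt (μ i) : ℝ) : ℂ) := by
    have hfun : ((fun _ : Fin d => ((1:ℝ) : ℂ)) - fun i => ((Real.sqrt (μ i) : ℝ) : ℂ))
        = fun i => ((1 - Real.sqrt (μ i) : ℝ) : ℂ) := by
      funext i; simp only [Pi.sub_apply]; push_cast; ring
    rw [hXeq]; conv_lhs => rw [h1]
    rw [conjD_sub, hfun]
  -- key PSD fact: (1-Λ) - (1-X)² is PSD
  have hkey : ((1 - Λ) - (1 - X) * (1 - X)).PosSemidef := by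
    rw [h1Λ, h1X, conjD_mul, conjD_sub]
    have : ((fun i => ((1 - μ i : ℝ) : ℂ)) - (fun i => ((1 - Real.sqrt (μ i) : ℝ) : ℂ)) *
        (fun i => ((1 - Real.sqrt (μ i) : ℝ) : ℂ)))
        = fun i => (((1 - μ i) - (1 - Real.sqrt (μ i)) * (1 - Real.sqrt (μ i)) : ℝ) : ℂ) := by
      funext i; simp only [Pi.sub_apply, Pi.mul_apply]; push_cast; ring
    rw [this]
    refine conjD_posSemidef V _ fun i => ?_
    have hs0 : 0 ≤ Real.sqrt (μ i) := Real.sqrt_nonneg _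
    have hs1 : Real.sqrt (μ i) ≤ 1 := by
      rw [show (1:ℝ) = Real.sqrt 1 by simp]
      exact Real.sqrt_le_sqrt (hμ1 i)
    have hsq : Real.sqrt (μ i) * Real.sqrt (μ i) = μ i := Real.mul_self_sqrt (hμ0 i)
    nlinarith
  -- spectral data of M
  set M := ρ - X * ρ * X with hMdef
  have hXρX : (X * ρ * X).PosSemidef := by
    have h2 := hρ.conjTranspose_mul_mul_same X
    rwa [hXh] at h2
  have hM : M.IsHermitian := hρ.1.sub hXρX.1
  set W := hM.eigenvectorUnitary with hWdef
  set lam := hM.eigenvalues with hlamdef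
  have hMeq : M = conjD W fun i => (lam i : ℂ) := spectral_conjD hM
  set s : Fin d → ℝ := fun i => if 0 ≤ lam i then 1 else -1 with hsdef
  set S := conjD W fun i => (s i : ℂ) with hSdef
  have hSh : Sᴴ = S := by
    have hfun : star (fun i => ((s i : ℝ) : ℂ)) = fun i => ((s i : ℝ) : ℂ) := by
      funext i
      simp [Complex.conj_ofReal]
    rw [hSdef, conjD_conjTranspose, hfun]
  have hSS : Sᴴ * S = 1 := by
    have hfun : ((fun i => ((s i : ℝ) : ℂ)) * fun i => ((s i : ℝ) : ℂ)) = (1 : Fin d → ℂ) := by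
      funext i
      simp only [Pi.mul_apply, Pi.one_apply, hsdef]
      by_cases hi : 0 ≤ lam i <;> simp [hi] <;> norm_num
    rw [hSh, hSdef, conjD_mul, hfun, conjD_one]
  have hSM : S * M = conjD W fun i => ((|lam i| : ℝ) : ℂ) := by
    have hfun : ((fun i => ((s i : ℝ) : ℂ)) * fun i => ((lam i : ℝ) : ℂ))
        = fun i => ((|lam i| : ℝ) : ℂ) := by
      funext i
      simp only [Pi.mul_apply, hsdef]
      by_cases hi : 0 ≤ lam i
      · simp [hi, abs_of_nonneg hi]
      · push_neg at hi
        rw [abs_of_neg hi]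
        simp [hi.not_ge]
    rw [hSdef, hMeq, conjD_mul, hfun]
  have hSMtr : ((S * M).trace).re = ∑ i, |lam i| := by
    rw [hSM, conjD_trace]
    rw [Complex.re_sum]
    simp
  -- traceNorm M = ∑ |lam i|
  have hTN : traceNorm M = ∑ i, |lam i| := by
    set R := conjD W fun i => ((|lam i| : ℝ) : ℂ) with hRdef
    have hRps : R.PosSemidef := conjD_posSemidef W _ fun i => abs_nonneg _
    have hR2 : R ^ 2 = Mᴴ * M := by
      have hfun1 : ((fun i => ((|lam i| : ℝ) : ℂ)) * fun i => ((|lam i| : ℝ) : ℂ))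
          = ((fun i => ((lam i : ℝ) : ℂ)) * fun i => ((lam i : ℝ) : ℂ)) := by
        funext i
        simp only [Pi.mul_apply, ← Complex.ofReal_mul, abs_mul_abs_self]
      rw [pow_two, hRdef, conjD_mul, hM.eq, hMeq, conjD_mul, hfun1]
    have hReq : R = (Matrix.posSemidef_conjTranspose_mul_self M).sqrt :=
      hRps.eq_sqrt_of_sq_eq _ hR2
    rw [traceNorm, ← hReq, hRdef, conjD_trace, Complex.re_sum]
    simp
  -- B = sqrt ρ, A = (1-X) * B
  set B := hρ.sqrt with hBdef
  have hBps : B.PosSemidef := hρ.posSemidef_sqrt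
  have hBh : Bᴴ = B := hBps.1
  have hBB : B * B = ρ := hρ.sqrt_mul_self
  set A := ((1 : Matrix (Fin d) (Fin d) ℂ) - X) * B with hAdef
  have h1Xh : ((1 : Matrix (Fin d) (Fin d) ℂ) - X)ᴴ = 1 - X := by
    rw [Matrix.conjTranspose_sub, Matrix.conjTranspose_one, hXh]
  have hAH : Aᴴ = B * (1 - X) := by rw [hAdef, Matrix.conjTranspose_mul, hBh, h1Xh]
  -- split the trace
  have htr : ((S * M).trace).re
      = ((Bᴴ * (S * A)).trace).re + ((Aᴴ * (S * (X * B))).trace).re := by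
    have e1 : S * M = (S * A) * B + (S * (X * B)) * (B * (1 - X)) := by
      rw [hMdef, hAdef, ← hBB]; noncomm_ring
    rw [e1, Matrix.trace_add, Complex.add_re, hBh, hAH,
      Matrix.trace_mul_comm (S * A) B, Matrix.trace_mul_comm (S * (X * B)) (B * (1 - X))]
  -- Frobenius computations
  have hfroSA : fro2 (S * A) = fro2 A := by
    rw [fro2, fro2, Matrix.conjTranspose_mul, Matrix.mul_assoc Aᴴ Sᴴ (S * A),
      ← Matrix.mul_assoc Sᴴ S A, hSS, Matrix.one_mul]
  have hfroB : fro2 B = 1 := by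
    rw [fro2, hBh, hBB, hρtr]; simp
  have hXX : X * X = Λ := hΛ.sqrt_mul_self
  have hfroSXB : fro2 (S * (X * B)) = ((Λ * ρ).trace).re := by
    rw [fro2, Matrix.conjTranspose_mul, Matrix.mul_assoc (X * B)ᴴ Sᴴ (S * (X * B)),
      ← Matrix.mul_assoc Sᴴ S (X * B), hSS, Matrix.one_mul, Matrix.conjTranspose_mul, hBh, hXh]
    have e : B * X * (X * B) = B * Λ * B := by
      rw [show B * X * (X * B) = B * (X * X) * B from by noncomm_ring, hXX]
    rw [e, Matrix.trace_mul_comm (B * Λ) B, ← Matrix.mul_assoc,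
      Matrix.trace_mul_comm (B * B) Λ, hBB]
  -- trace of (1-Λ) against ρ
  have hconj1Λ : (B * (1 - Λ) * B).PosSemidef := by
    have := hΛI.mul_mul_conjTranspose_same B
    rwa [hBh] at this
  have htr1Λ : ((B * (1 - Λ) * B).trace).re = 1 - ((Λ * ρ).trace).re := by
    have e : B * (1 - Λ) * B = ρ - B * Λ * B := by rw [← hBB]; noncomm_ring
    have h3 : (B * Λ * B).trace = (Λ * ρ).trace := by
      rw [Matrix.trace_mul_comm (B * Λ) B, ← Matrix.mul_assoc, Matrix.trace_mul_comm (B * B) Λ, hBB]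
    rw [e, Matrix.trace_sub, h3, Complex.sub_re, hρtr]
    simp
  have hΛρ1 : ((Λ * ρ).trace).re ≤ 1 := by
    have := trace_re_nonneg' hconj1Λ
    rw [htr1Λ] at this
    linarith
  -- fro2 A ≤ ε
  have hfroA : fro2 A ≤ ε := by
    have hAA : Aᴴ * A = B * ((1 - X) * (1 - X)) * B := by
      rw [hAH, hAdef]; noncomm_ring
    have hc : (B * ((1 - Λ) - (1 - X) * (1 - X)) * B).PosSemidef := by
      have := hkey.mul_mul_conjTranspose_same B
      rwa [hBh] at this
    have hce : B * ((1 - Λ) - (1 - X) * (1 - X)) * B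
        = B * (1 - Λ) * B - B * ((1 - X) * (1 - X)) * B := by noncomm_ring
    have h4 := trace_re_nonneg' hc
    rw [hce, Matrix.trace_sub, Complex.sub_re] at h4
    rw [fro2, hAA]
    have : ((B * ((1 - X) * (1 - X)) * B).trace).re ≤ 1 - ((Λ * ρ).trace).re := by
      rw [← htr1Λ]; linarith
    linarith
  have hfroA0 : 0 ≤ fro2 A := fro2_nonneg A
  -- put it together
  have hb1 : ((Bᴴ * (S * A)).trace).re ≤ Real.sqrt (fro2 A) := by
    have := cs B (S * A)
    rw [hfroSA, hfroB, Real.sqrt_one, one_mul] at this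
    exact this
  have hb2 : ((Aᴴ * (S * (X * B))).trace).re ≤ Real.sqrt (fro2 A) := by
    have h5 := cs A (S * (X * B))
    have h6 : Real.sqrt (fro2 (S * (X * B))) ≤ 1 := by
      rw [hfroSXB]
      exact Real.sqrt_le_one.mpr hΛρ1
    calc ((Aᴴ * (S * (X * B))).trace).re
        ≤ Real.sqrt (fro2 A) * Real.sqrt (fro2 (S * (X * B))) := h5
      _ ≤ Real.sqrt (fro2 A) * 1 := by
          exact mul_le_mul_of_nonneg_left h6 (Real.sqrt_nonneg _)
      _ = Real.sqrt (fro2 A) := mul_one _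
  have hfinal : Real.sqrt (fro2 A) ≤ Real.sqrt ε := Real.sqrt_le_sqrt hfroA
  calc traceNorm M = ∑ i, |lam i| := hTN
    _ = ((S * M).trace).re := hSMtr.symm
    _ = ((Bᴴ * (S * A)).trace).re + ((Aᴴ * (S * (X * B))).trace).re := htr
    _ ≤ Real.sqrt (fro2 A) + Real.sqrt (fro2 A) := add_le_add hb1 hb2
    _ = 2 * Real.sqrt (fro2 A) := by ring
    _ ≤ 2 * Real.sqrt ε := by linarith
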